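/- arXiv:1705.10065 — 2 statements merged into one kernel-verified Lean document; each statement's English description precedes it below -/
import Mathlib

section
/- For all b ≥ 2, all x ∈ {1,...,b−1}, all ℓ ≥ 1, and all r with 0 ≤ r ≤ b^{ℓ-1}, one has A_b(x·b^ℓ + x·b^{ℓ-1} + r) = (4xb − 2x − 2b + 2)·(2b−1)^{ℓ-1} + 2·A_b(x·b^{ℓ-1} + r) − A_b(r). -/
/-- Number of distinct words in `L_b` (no leading zero, or empty) occurring as
scattered subwords (subsequences) of `u`. -/
def lbCount (u : List ℕ) : ℕ :=
  ((u.sublists.filter (fun v => v.head? ≠ some 0)).dedup).length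

/-- `S_b(n)`: number of distinct words of `L_b` occurring as scattered subwords of
the base-`b` expansion of `n` (most significant digit first, `rep_b(0) = ε`). -/
def Sb (b n : ℕ) : ℕ := lbCount ((Nat.digits b n).reverse)

/-- Summatory function `A_b(n) = ∑_{j<n} S_b(j)`. -/
def Asum (b n : ℕ) : ℕ := ∑ j ∈ Finset.range n, Sb b j

def SubF (w : List ℕ) : Finset (List ℕ) := w.sublists.toFinset

def dCnt (w : List ℕ) : ℕ := (SubF w).card
def sCnt (x : ℕ) (w : List ℕ) : ℕ := ((SubF w).filter (fun v => v.head? = some x)).card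
def lbC (w : List ℕ) : ℕ := ((SubF w).filter (fun v => v.head? ≠ some 0)).card

lemma mem_SubF {v w : List ℕ} : v ∈ SubF w ↔ v.Sublist w := by
  simp [SubF, List.mem_sublists]

lemma lbCount_eq_lbC (u : List ℕ) : lbCount u = lbC u := by
  rw [lbCount, lbC, SubF, ← List.card_toFinset, List.toFinset_filter]
  exact congrArg Finset.card (Finset.filter_congr (fun v _ => by simp))

lemma SubF_cons (a : ℕ) (w : List ℕ) :
    SubF (a :: w) = SubF w ∪ (SubF w).image (a :: ·) := by
  ext v
  simp only [mem_SubF, Finset.mem_union, Finset.mem_image]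
  constructor
  · intro h
    rcases List.sublist_cons_iff.mp h with h | ⟨r, rfl, hr⟩
    · exact Or.inl h
    · exact Or.inr ⟨r, hr, rfl⟩
  · rintro (h | ⟨r, hr, rfl⟩)
    · exact h.cons a
    · exact hr.cons₂ a

lemma SubF_inter (a : ℕ) (w : List ℕ) :
    SubF w ∩ (SubF w).image (a :: ·) = (SubF w).filter (fun v => v.head? = some a) := by
  ext v
  simp only [Finset.mem_inter, Finset.mem_image, Finset.mem_filter]
  constructor
  · rintro ⟨hv, r, hr, rfl⟩; exact ⟨hv, rfl⟩
  · rintro ⟨hv, hh⟩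
    refine ⟨hv, v.tail, ?_, ?_⟩
    · exact mem_SubF.mpr ((List.tail_sublist v).trans (mem_SubF.mp hv))
    · cases v with
      | nil => simp at hh
      | cons c t =>
        simp only [List.head?_cons, Option.some.injEq] at hh
        subst hh; rfl

lemma cons_inj' (a : ℕ) : Function.Injective (fun v : List ℕ => a :: v) :=
  fun v₁ v₂ h => by injection h

lemma dCnt_cons (a : ℕ) (w : List ℕ) : dCnt (a :: w) + sCnt a w = 2 * dCnt w := by
  have h := Finset.card_union_add_card_inter (SubF w) ((SubF w).image (fun v => a :: v))
  rw [SubF_inter, Finset.card_image_of_injective _ (cons_inj' a)] at h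
  simpa [dCnt, sCnt, SubF_cons, two_mul] using h

lemma filter_subset_image (a : ℕ) (w : List ℕ) :
    (SubF w).filter (fun v => v.head? = some a) ⊆ (SubF w).image (a :: ·) := by
  rw [← SubF_inter]; exact Finset.inter_subset_right

lemma sCnt_cons_self (a : ℕ) (w : List ℕ) : sCnt a (a :: w) = dCnt w := by
  rw [sCnt, SubF_cons, Finset.filter_union]
  have h1 : ((SubF w).image (a :: ·)).filter (fun v => v.head? = some a)
      = (SubF w).image (a :: ·) := by
    refine Finset.filter_true_of_mem ?_
    intro v hv
    rcases Finset.mem_image.mp hv with ⟨r, _, rfl⟩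
    rfl
  rw [h1, Finset.union_eq_right.mpr (filter_subset_image a w), dCnt,
    Finset.card_image_of_injective _ (cons_inj' a)]

lemma sCnt_cons_ne {a x : ℕ} (h : a ≠ x) (w : List ℕ) : sCnt x (a :: w) = sCnt x w := by
  rw [sCnt, SubF_cons, Finset.filter_union]
  have h1 : ((SubF w).image (a :: ·)).filter (fun v => v.head? = some x) = ∅ := by
    rw [Finset.filter_image,
      Finset.filter_eq_empty_iff.mpr (fun v _ => by simp [h]), Finset.image_empty]
  rw [h1, Finset.union_empty]; rfl

lemma lbC_cons_zero (w : List ℕ) : lbC (0 :: w) = lbC w := by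
  rw [lbC, SubF_cons, Finset.filter_union]
  have h1 : ((SubF w).image ((0:ℕ) :: ·)).filter (fun v => v.head? ≠ some 0) = ∅ := by
    rw [Finset.filter_image,
      Finset.filter_eq_empty_iff.mpr (fun v _ => by simp), Finset.image_empty]
  rw [h1, Finset.union_empty]; rfl

lemma lbC_cons_pos {a : ℕ} (ha : a ≠ 0) (w : List ℕ) :
    lbC (a :: w) + sCnt a w = lbC w + dCnt w := by
  rw [lbC, SubF_cons, Finset.filter_union]
  have h1 : ((SubF w).image (a :: ·)).filter (fun v => v.head? ≠ some 0)
      = (SubF w).image (a :: ·) := by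
    refine Finset.filter_true_of_mem ?_
    intro v hv
    rcases Finset.mem_image.mp hv with ⟨r, _, rfl⟩
    simp [ha]
  rw [h1]
  have h := Finset.card_union_add_card_inter
    ((SubF w).filter (fun v => v.head? ≠ some 0)) ((SubF w).image (fun v => a :: v))
  have h2 : ((SubF w).filter (fun v => v.head? ≠ some 0)) ∩ ((SubF w).image (fun v => a :: v))
      = (SubF w).filter (fun v => v.head? = some a) := by
    ext v
    simp only [Finset.mem_inter, Finset.mem_filter, Finset.mem_image]
    constructor
    · rintro ⟨⟨hv, _⟩, r, hr, rfl⟩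
      exact ⟨hv, rfl⟩
    · rintro ⟨hv, hh⟩
      refine ⟨⟨hv, by rw [hh]; simp [ha]⟩, v.tail, ?_, ?_⟩
      · exact mem_SubF.mpr ((List.tail_sublist v).trans (mem_SubF.mp hv))
      · cases v with
        | nil => simp at hh
        | cons c t =>
          simp only [List.head?_cons, Option.some.injEq] at hh
          subst hh; rfl
  rw [h2, Finset.card_image_of_injective _ (cons_inj' a)] at h
  simpa [lbC, sCnt, dCnt] using h

lemma SubF_nil : SubF [] = {[]} := by simp [SubF]

lemma dCnt_nil : dCnt [] = 1 := by simp [dCnt, SubF_nil]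

lemma sCnt_nil (x : ℕ) : sCnt x [] = 0 := by
  rw [sCnt, SubF_nil]
  rw [Finset.filter_eq_empty_iff.mpr (fun v hv => by simp [Finset.mem_singleton.mp hv])]
  simp

lemma lbC_nil : lbC [] = 1 := by
  rw [lbC, SubF_nil]
  decide
def padL (b m j : ℕ) : List ℕ :=
  Nat.digits b j ++ List.replicate (m - (Nat.digits b j).length) 0

def Wd (b m j : ℕ) : List ℕ := (padL b m j).reverse

lemma digits_length_le {b m j : ℕ} (hb : 2 ≤ b) (hj : j < b ^ m) :
    (Nat.digits b j).length ≤ m := by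
  rcases Nat.eq_zero_or_pos j with rfl | hj0
  · simp
  · rw [Nat.digits_len b j (by omega) (by omega)]
    have := (Nat.log_lt_iff_lt_pow (by omega : 1 < b) (by omega : j ≠ 0)).mpr hj
    omega

lemma digits_single {b x : ℕ} (hx : 1 ≤ x) (hxb : x < b) : Nat.digits b x = [x] := by
  rw [Nat.digits_def' (by omega : 1 < b) (by omega : 0 < x),
    Nat.mod_eq_of_lt hxb, Nat.div_eq_of_lt hxb, Nat.digits_zero]

lemma digits_mul_pow_add {b x m j : ℕ} (hb : 2 ≤ b) (hx : 1 ≤ x) (hxb : x < b)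
    (hj : j < b ^ m) : Nat.digits b (x * b ^ m + j) = padL b m j ++ [x] := by
  have h := Nat.digits_append_zeroes_append_digits
    (b := b) (k := m - (Nat.digits b j).length) (m := x) (n := j)
    (by omega : 1 < b) (by omega : 0 < x)
  have hlen : (Nat.digits b j).length + (m - (Nat.digits b j).length) = m := by
    have := digits_length_le hb hj; omega
  rw [hlen, digits_single hx hxb] at h
  rw [show x * b ^ m + j = j + b ^ m * x by ring, ← h, padL]

lemma padL_length {b m j : ℕ} (hb : 2 ≤ b) (hj : j < b ^ m) :
    (padL b m j).length = m := by
  have := digits_length_le hb hj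
  simp [padL]
  omega

lemma Wd_succ {b m y k : ℕ} (hb : 2 ≤ b) (hy : y < b) (hk : k < b ^ m) :
    Wd b (m + 1) (y * b ^ m + k) = y :: Wd b m k := by
  rcases Nat.eq_zero_or_pos y with rfl | hy0
  · simp only [zero_mul, zero_add]
    rw [Wd, Wd, padL, padL]
    have hlen := digits_length_le hb hk
    have h : m + 1 - (Nat.digits b k).length = (m - (Nat.digits b k).length) + 1 := by omega
    rw [h, List.replicate_succ', ← List.append_assoc]
    simp
  · have h := digits_mul_pow_add hb hy0 hy hk
    have hlen : (Nat.digits b (y * b ^ m + k)).length = m + 1 := by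
      rw [h, List.length_append, padL_length hb hk]
      simp
    rw [Wd, padL, hlen, Nat.sub_self, List.replicate_zero, List.append_nil, h,
      List.reverse_append]
    rfl

lemma lbC_replicate_append (n : ℕ) (w : List ℕ) :
    lbC (List.replicate n 0 ++ w) = lbC w := by
  induction n with
  | zero => simp
  | succ n ih => rw [List.replicate_succ, List.cons_append, lbC_cons_zero, ih]

lemma lbC_Wd (b m j : ℕ) : lbC (Wd b m j) = Sb b j := by
  rw [Sb, lbCount_eq_lbC, Wd, padL, List.reverse_append, List.reverse_replicate,
    lbC_replicate_append]
def Dm (b m : ℕ) : ℕ := ∑ k ∈ Finset.range (b ^ m), dCnt (Wd b m k)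
def Smx (b x m : ℕ) : ℕ := ∑ k ∈ Finset.range (b ^ m), sCnt x (Wd b m k)

lemma Wd_zero (b : ℕ) : Wd b 0 0 = [] := by
  simp [Wd, padL]

lemma Dm_zero (b : ℕ) : Dm b 0 = 1 := by
  simp [Dm, Wd_zero, dCnt_nil]

lemma Smx_zero (b x : ℕ) : Smx b x 0 = 0 := by
  simp [Smx, Wd_zero, sCnt_nil]

lemma sum_range_mul {M : Type*} [AddCommMonoid M] (g : ℕ → M) (a n : ℕ) :
    ∑ j ∈ Finset.range (a * n), g j
      = ∑ y ∈ Finset.range a, ∑ k ∈ Finset.range n, g (y * n + k) := by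
  induction a with
  | zero => simp
  | succ a ih =>
    rw [Nat.succ_mul, Finset.sum_range_add, ih, Finset.sum_range_succ]

lemma sum_Wd_succ {b : ℕ} (hb : 2 ≤ b) (f : List ℕ → ℤ) (m : ℕ) :
    ∑ j ∈ Finset.range (b ^ (m + 1)), f (Wd b (m + 1) j)
      = ∑ y ∈ Finset.range b, ∑ k ∈ Finset.range (b ^ m), f (y :: Wd b m k) := by
  rw [show b ^ (m + 1) = b * b ^ m by ring, sum_range_mul]
  refine Finset.sum_congr rfl fun y hy => Finset.sum_congr rfl fun k hk => ?_
  rw [Wd_succ hb (Finset.mem_range.mp hy) (Finset.mem_range.mp hk)]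

lemma sum_ite_range {A B : ℤ} {x n : ℕ} (hx : x < n) :
    ∑ y ∈ Finset.range n, (if y = x then A else B) = A + ((n : ℤ) - 1) * B := by
  have h : ∀ y ∈ Finset.range n,
      (if y = x then A else B) = B + (if y = x then A - B else 0) := by
    intro y _; split <;> ring
  rw [Finset.sum_congr rfl h, Finset.sum_add_distrib, Finset.sum_const,
    Finset.sum_ite_eq' (Finset.range n) x fun _ => A - B,
    if_pos (Finset.mem_range.mpr hx), Finset.card_range]
  push_cast
  ring

lemma dCnt_cons_z (a : ℕ) (w : List ℕ) :
    (dCnt (a :: w) : ℤ) = 2 * dCnt w - sCnt a w := by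
  have := dCnt_cons a w
  have h2 : (dCnt (a :: w) : ℤ) + sCnt a w = 2 * dCnt w := by exact_mod_cast congrArg (Nat.cast : ℕ → ℤ) this
  linarith

lemma Smx_succ {b x m : ℕ} (hb : 2 ≤ b) (hx : x < b) :
    (Smx b x (m + 1) : ℤ) = Dm b m + ((b : ℤ) - 1) * Smx b x m := by
  have h0 : (Smx b x (m + 1) : ℤ)
      = ∑ j ∈ Finset.range (b ^ (m + 1)), (sCnt x (Wd b (m + 1) j) : ℤ) := by
    rw [Smx]; push_cast; rfl
  rw [h0, sum_Wd_succ hb (fun w => (sCnt x w : ℤ)) m]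
  have h1 : ∀ y ∈ Finset.range b,
      ∑ k ∈ Finset.range (b ^ m), (sCnt x (y :: Wd b m k) : ℤ)
        = (if y = x then (Dm b m : ℤ) else (Smx b x m : ℤ)) := by
    intro y _
    by_cases hyx : y = x
    · subst hyx
      rw [if_pos rfl, Dm]
      push_cast
      exact Finset.sum_congr rfl fun k _ => by rw [sCnt_cons_self]
    · rw [if_neg hyx, Smx]
      push_cast
      exact Finset.sum_congr rfl fun k _ => by rw [sCnt_cons_ne hyx]
  rw [Finset.sum_congr rfl h1, sum_ite_range hx]

lemma Smx_eq {b x m : ℕ} (hb : 2 ≤ b) (hx : x < b) :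
    (Smx b x m : ℤ) = Smx b 0 m := by
  induction m with
  | zero => rw [Smx_zero, Smx_zero]
  | succ m ih =>
    rw [Smx_succ hb hx, Smx_succ hb (by omega : 0 < b), ih]

lemma Dm_succ {b m : ℕ} (hb : 2 ≤ b) :
    (Dm b (m + 1) : ℤ) = 2 * b * Dm b m - b * Smx b 0 m := by
  have h0 : (Dm b (m + 1) : ℤ)
      = ∑ j ∈ Finset.range (b ^ (m + 1)), (dCnt (Wd b (m + 1) j) : ℤ) := by
    rw [Dm]; push_cast; rfl
  rw [h0, sum_Wd_succ hb (fun w => (dCnt w : ℤ)) m]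
  have h1 : ∀ y ∈ Finset.range b,
      ∑ k ∈ Finset.range (b ^ m), (dCnt (y :: Wd b m k) : ℤ)
        = 2 * (Dm b m : ℤ) - Smx b 0 m := by
    intro y hy
    have : ∑ k ∈ Finset.range (b ^ m), (dCnt (y :: Wd b m k) : ℤ)
        = ∑ k ∈ Finset.range (b ^ m), (2 * (dCnt (Wd b m k) : ℤ) - sCnt y (Wd b m k)) :=
      Finset.sum_congr rfl fun k _ => dCnt_cons_z y (Wd b m k)
    rw [this, Finset.sum_sub_distrib, ← Finset.mul_sum]
    rw [show ∑ k ∈ Finset.range (b ^ m), (sCnt y (Wd b m k) : ℤ) = (Smx b y m : ℤ) by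
      rw [Smx]; push_cast; rfl]
    rw [Smx_eq hb (Finset.mem_range.mp hy)]
    rw [show ∑ k ∈ Finset.range (b ^ m), (dCnt (Wd b m k) : ℤ) = (Dm b m : ℤ) by
      rw [Dm]; push_cast; rfl]
  rw [Finset.sum_congr rfl h1, Finset.sum_const, Finset.card_range, nsmul_eq_mul]
  ring

lemma Dm_sub_Smx {b : ℕ} (hb : 2 ≤ b) (m : ℕ) :
    (Dm b m : ℤ) = Smx b 0 m + (2 * (b : ℤ) - 1) ^ m := by
  induction m with
  | zero => simp [Dm_zero, Smx_zero]
  | succ m ih =>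
    rw [Dm_succ hb, Smx_succ hb (by omega : 0 < b), ih]
    ring
lemma Sb_zero (b : ℕ) : Sb b 0 = 1 := by
  rw [Sb, Nat.digits_zero, List.reverse_nil, lbCount_eq_lbC, lbC_nil]

lemma Sb_small {b j : ℕ} (hb : 2 ≤ b) (hj : 1 ≤ j) (hjb : j < b) : Sb b j = 2 := by
  rw [Sb, digits_single hj hjb]
  have h := lbC_cons_pos (by omega : j ≠ 0) []
  rw [sCnt_nil, lbC_nil, dCnt_nil] at h
  rw [lbCount_eq_lbC]
  simpa using h

lemma Sb_block {b x m j : ℕ} (hb : 2 ≤ b) (hx : 1 ≤ x) (hxb : x < b) (hj : j < b ^ m) :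
    (Sb b (x * b ^ m + j) : ℤ)
      = Sb b j + dCnt (Wd b m j) - sCnt x (Wd b m j) := by
  rw [Sb, lbCount_eq_lbC, digits_mul_pow_add hb hx hxb hj, List.reverse_append]
  have hrw : ([x].reverse ++ (padL b m j).reverse) = x :: Wd b m j := rfl
  rw [hrw]
  have h := lbC_cons_pos (by omega : x ≠ 0) (Wd b m j)
  have h2 := lbC_Wd b m j
  omega

lemma Asum_block {b x m N : ℕ} (hb : 2 ≤ b) (hx : 1 ≤ x) (hxb : x < b) (hN : N ≤ b ^ m) :
    (Asum b (x * b ^ m + N) : ℤ)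
      = Asum b (x * b ^ m) + Asum b N
        + ∑ j ∈ Finset.range N, ((dCnt (Wd b m j) : ℤ) - sCnt x (Wd b m j)) := by
  rw [Asum, Finset.sum_range_add]
  push_cast
  have e1 : ∑ j ∈ Finset.range (x * b ^ m), (Sb b j : ℤ) = (Asum b (x * b ^ m) : ℤ) := by
    rw [Asum]; push_cast; rfl
  rw [e1]
  have h : ∀ j ∈ Finset.range N, (Sb b (x * b ^ m + j) : ℤ)
      = Sb b j + ((dCnt (Wd b m j) : ℤ) - sCnt x (Wd b m j)) := by
    intro j hj
    have := Sb_block hb hx hxb (lt_of_lt_of_le (Finset.mem_range.mp hj) hN) (m := m)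
    linarith
  rw [Finset.sum_congr rfl h, Finset.sum_add_distrib]
  have : ∑ j ∈ Finset.range N, (Sb b j : ℤ) = (Asum b N : ℤ) := by
    rw [Asum]; push_cast; rfl
  rw [this]
  ring

lemma Asum_base {b x : ℕ} (hb : 2 ≤ b) (hx : 1 ≤ x) (hxb : x ≤ b) :
    (Asum b x : ℤ) = 2 * x - 1 := by
  induction x with
  | zero => omega
  | succ x ih =>
    rcases Nat.eq_zero_or_pos x with rfl | hx0
    · simp [Asum, Sb_zero]
    · rw [Asum, Finset.sum_range_succ, ← Asum]
      push_cast
      rw [ih hx0 (by omega), Sb_small hb hx0 (by omega)]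
      push_cast
      ring

lemma Asum_pow_mul {b : ℕ} (hb : 2 ≤ b) :
    ∀ m x : ℕ, 1 ≤ x → x ≤ b →
      (Asum b (x * b ^ m) : ℤ) = (2 * x - 1) * (2 * (b : ℤ) - 1) ^ m := by
  intro m
  induction m with
  | zero =>
    intro x hx hxb
    simpa using Asum_base hb hx hxb
  | succ m ih =>
    intro x
    induction x with
    | zero => omega
    | succ x ihx =>
      intro _ hxb
      rcases Nat.eq_zero_or_pos x with rfl | hx0
      · have h := ih b (by omega) le_rfl
        rw [show b * b ^ m = b ^ (m + 1) by ring] at h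
        rw [show (0 + 1) * b ^ (m + 1) = b ^ (m + 1) by ring, h]
        push_cast
        ring
      · have hxb' : x < b := by omega
        have hblock := Asum_block (N := b ^ (m + 1)) (m := m + 1) hb hx0 hxb' le_rfl
        have hsum : ∑ j ∈ Finset.range (b ^ (m + 1)),
            ((dCnt (Wd b (m + 1) j) : ℤ) - sCnt x (Wd b (m + 1) j))
              = (2 * (b : ℤ) - 1) ^ (m + 1) := by
          rw [Finset.sum_sub_distrib]
          rw [show ∑ j ∈ Finset.range (b ^ (m + 1)), (dCnt (Wd b (m + 1) j) : ℤ)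
              = (Dm b (m + 1) : ℤ) by rw [Dm]; push_cast; rfl]
          rw [show ∑ j ∈ Finset.range (b ^ (m + 1)), (sCnt x (Wd b (m + 1) j) : ℤ)
              = (Smx b x (m + 1) : ℤ) by rw [Smx]; push_cast; rfl]
          rw [Smx_eq hb hxb', Dm_sub_Smx hb]
          ring
        have hxpow := ihx hx0 (by omega)
        have hbpow := ih b (by omega) le_rfl
        rw [show b * b ^ m = b ^ (m + 1) by ring] at hbpow
        rw [show (x + 1) * b ^ (m + 1) = x * b ^ (m + 1) + b ^ (m + 1) by ring,
          hblock, hxpow, hbpow, hsum]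
        push_cast
        ring
lemma cast_sum_dCnt (b m : ℕ) :
    ∑ k ∈ Finset.range (b ^ m), (dCnt (Wd b m k) : ℤ) = (Dm b m : ℤ) := by
  rw [Dm]; push_cast; rfl

lemma cast_sum_sCnt (b x m : ℕ) :
    ∑ k ∈ Finset.range (b ^ m), (sCnt x (Wd b m k) : ℤ) = (Smx b x m : ℤ) := by
  rw [Smx]; push_cast; rfl

theorem stmt17 (b x ℓ r : ℕ) (hb : 2 ≤ b) (hx : 1 ≤ x) (hxb : x < b)
    (hℓ : 1 ≤ ℓ) (hr : r ≤ b ^ (ℓ - 1)) :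
    (Asum b (x * b ^ ℓ + x * b ^ (ℓ - 1) + r) : ℤ) =
      (4 * x * b - 2 * x - 2 * b + 2) * (2 * b - 1) ^ (ℓ - 1) +
        2 * Asum b (x * b ^ (ℓ - 1) + r) - Asum b r := by
  obtain ⟨m, rfl⟩ : ∃ m, ℓ = m + 1 := ⟨ℓ - 1, by omega⟩
  simp only [Nat.add_sub_cancel] at hr ⊢
  have hbm : x * b ^ m + r ≤ b ^ (m + 1) := by
    have h1 : x * b ^ m ≤ (b - 1) * b ^ m := Nat.mul_le_mul_right _ (by omega)
    have h2 : (b - 1) * b ^ m + b ^ m = b ^ (m + 1) := by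
      have hb1 : b - 1 + 1 = b := by omega
      calc (b - 1) * b ^ m + b ^ m = (b - 1 + 1) * b ^ m := by ring
        _ = b * b ^ m := by rw [hb1]
        _ = b ^ (m + 1) := by ring
    omega
  have h1 := Asum_block (m := m + 1) (N := x * b ^ m + r) hb hx hxb hbm
  have h2 := Asum_block (m := m) (N := r) hb hx hxb hr
  have hA1 := Asum_pow_mul hb (m + 1) x hx (le_of_lt hxb)
  have hA2 := Asum_pow_mul hb m x hx (le_of_lt hxb)
  have hsplit : ∑ j ∈ Finset.range (x * b ^ m + r),
      ((dCnt (Wd b (m + 1) j) : ℤ) - sCnt x (Wd b (m + 1) j))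
      = 2 * x * (2 * (b : ℤ) - 1) ^ m
        + ∑ k ∈ Finset.range r, ((dCnt (Wd b m k) : ℤ) - sCnt x (Wd b m k)) := by
    rw [Finset.sum_range_add]
    congr 1
    · rw [sum_range_mul (fun j => (dCnt (Wd b (m + 1) j) : ℤ) - sCnt x (Wd b (m + 1) j))
        x (b ^ m)]
      have hy : ∀ y ∈ Finset.range x,
          ∑ k ∈ Finset.range (b ^ m),
            ((dCnt (Wd b (m + 1) (y * b ^ m + k)) : ℤ)
              - sCnt x (Wd b (m + 1) (y * b ^ m + k)))
          = 2 * ((2 * (b : ℤ) - 1) ^ m) := by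
        intro y hymem
        have hyx : y < x := Finset.mem_range.mp hymem
        have hyb : y < b := lt_trans hyx hxb
        have hterm : ∀ k ∈ Finset.range (b ^ m),
            ((dCnt (Wd b (m + 1) (y * b ^ m + k)) : ℤ)
              - sCnt x (Wd b (m + 1) (y * b ^ m + k)))
            = (2 * (dCnt (Wd b m k) : ℤ) - sCnt y (Wd b m k)) - sCnt x (Wd b m k) := by
          intro k hk
          rw [Wd_succ hb hyb (Finset.mem_range.mp hk), dCnt_cons_z,
            sCnt_cons_ne (Nat.ne_of_lt hyx)]
        rw [Finset.sum_congr rfl hterm, Finset.sum_sub_distrib, Finset.sum_sub_distrib,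
          ← Finset.mul_sum, cast_sum_dCnt, cast_sum_sCnt, cast_sum_sCnt,
          Smx_eq hb hyb, Smx_eq hb hxb, Dm_sub_Smx hb]
        ring
      rw [Finset.sum_congr rfl hy, Finset.sum_const, Finset.card_range, nsmul_eq_mul]
      ring
    · refine Finset.sum_congr rfl fun k hk => ?_
      have hk' : k < b ^ m := lt_of_lt_of_le (Finset.mem_range.mp hk) hr
      rw [Wd_succ hb hxb hk', dCnt_cons_z, sCnt_cons_self]
      ring
  rw [hsplit] at h1
  rw [show x * b ^ (m + 1) + x * b ^ m + r = x * b ^ (m + 1) + (x * b ^ m + r) from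
    add_assoc _ _ _]
  push_cast
  linear_combination h1 + hA1 - h2 - hA2
end

section
/- For every b ≥ 2 and every n ≥ 0, A_b(b·n) = (2b−1)·A_b(n). -/
/-- The finset of `L`-subwords of `w`. -/
def Tf (w : List ℕ) : Finset (List ℕ) :=
  (w.sublists.filter (fun v => v.head? ≠ some 0)).toFinset

lemma mem_Tf {w v : List ℕ} : v ∈ Tf w ↔ v.Sublist w ∧ v.head? ≠ some 0 := by
  simp [Tf, List.mem_filter, List.mem_sublists]

lemma lbCount_eq (w : List ℕ) : lbCount w = (Tf w).card :=
  (List.card_toFinset _).symm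

lemma nil_mem_Tf (w : List ℕ) : [] ∈ Tf w := by
  simp [mem_Tf]

lemma Tf_card_pos (w : List ℕ) : 1 ≤ (Tf w).card :=
  Finset.card_pos.mpr ⟨[], nil_mem_Tf w⟩

lemma head?_append_ne {v : List ℕ} (hv : v ≠ []) (a : ℕ) : (v ++ [a]).head? = v.head? := by
  cases v with
  | nil => exact absurd rfl hv
  | cons x xs => simp

lemma Tf_append (w : List ℕ) (a : ℕ) :
    Tf (w ++ [a]) =
      Tf w ∪ (if a = 0 then (Tf w).erase [] else Tf w).image (· ++ [a]) := by
  ext u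
  simp only [mem_Tf, Finset.mem_union, Finset.mem_image]
  constructor
  · rintro ⟨hs, hh⟩
    rcases List.sublist_append_iff.mp hs with ⟨l₁, l₂, rfl, h1, h2⟩
    rcases List.sublist_singleton.mp h2 with rfl | rfl
    · left; simpa using ⟨h1, by simpa using hh⟩
    · right
      refine ⟨l₁, ?_, rfl⟩
      by_cases hl : l₁ = []
      · subst hl
        simp only [List.nil_append, List.head?_cons] at hh
        have ha : a ≠ 0 := fun h => hh (by rw [h])
        simp only [if_neg ha]
        exact nil_mem_Tf w
      · have hhead : l₁.head? ≠ some 0 := by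
          rw [head?_append_ne hl a] at hh; exact hh
        split_ifs with h0
        · exact Finset.mem_erase.mpr ⟨hl, mem_Tf.mpr ⟨h1, hhead⟩⟩
        · exact mem_Tf.mpr ⟨h1, hhead⟩
  · rintro (⟨hs, hh⟩ | ⟨v, hv, rfl⟩)
    · exact ⟨hs.trans (List.sublist_append_left w [a]), hh⟩
    · have hv' : v ∈ Tf w ∧ (a = 0 → v ≠ []) := by
        split_ifs at hv with h0
        · exact ⟨(Finset.mem_erase.mp hv).2, fun _ => (Finset.mem_erase.mp hv).1⟩
        · exact ⟨hv, fun h => absurd h h0⟩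
      obtain ⟨hs, hh⟩ := mem_Tf.mp hv'.1
      refine ⟨hs.append (List.Sublist.refl [a]), ?_⟩
      by_cases hl : v = []
      · subst hl
        have ha : a ≠ 0 := fun h0 => (hv'.2 h0) rfl
        simpa using ha
      · rw [head?_append_ne hl a]; exact hh

lemma Tf_inter (w : List ℕ) (a : ℕ) :
    Tf w ∩ (if a = 0 then (Tf w).erase [] else Tf w).image (· ++ [a])
      = (Tf w).filter (fun u => u.getLast? = some a) := by
  ext u
  simp only [Finset.mem_inter, Finset.mem_image, Finset.mem_filter]
  constructor
  · rintro ⟨hu, v, hv, rfl⟩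
    exact ⟨hu, List.getLast?_concat (l := v)⟩
  · rintro ⟨hu, hl⟩
    refine ⟨hu, ?_⟩
    obtain ⟨hus, huh⟩ := mem_Tf.mp hu
    have hne : u ≠ [] := by rintro rfl; simp at hl
    have h2 : u.getLast hne = a := by
      rw [List.getLast?_eq_getLast (l := u) hne] at hl
      exact Option.some_inj.mp hl
    have h1 : u.dropLast ++ [a] = u := by
      rw [← h2]; exact List.dropLast_append_getLast hne
    refine ⟨u.dropLast, ?_, h1⟩
    have hds : u.dropLast.Sublist w := (List.dropLast_sublist u).trans hus
    by_cases hdl : u.dropLast = []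
    · have hua : u = [a] := by rw [← h1, hdl]; rfl
      have ha : a ≠ 0 := by
        rintro rfl
        exact huh (by rw [hua]; rfl)
      simp only [if_neg ha]
      exact mem_Tf.mpr ⟨hds, by rw [hdl]; simp⟩
    · have hdh : u.dropLast.head? ≠ some 0 := by
        rw [← head?_append_ne hdl a, h1]; exact huh
      split_ifs with h0
      · exact Finset.mem_erase.mpr ⟨hdl, mem_Tf.mpr ⟨hds, hdh⟩⟩
      · exact mem_Tf.mpr ⟨hds, hdh⟩

lemma sum_fibers {b : ℕ} {w : List ℕ} (hw : ∀ d ∈ w, d < b) :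
    ∑ a ∈ Finset.range b, ((Tf w).filter (fun u => u.getLast? = some a)).card
      = (Tf w).card - 1 := by
  have herase : ((Tf w).erase []).card = (Tf w).card - 1 :=
    Finset.card_erase_of_mem (nil_mem_Tf w)
  have hfib : ((Tf w).erase []).card =
      ∑ o ∈ (Finset.range b).image some,
        (((Tf w).erase []).filter (fun u => u.getLast? = o)).card := by
    apply Finset.card_eq_sum_card_fiberwise
    intro u hu
    obtain ⟨hune, hu⟩ := Finset.mem_erase.mp hu
    obtain ⟨hus, -⟩ := mem_Tf.mp hu
    have hmem : u.getLast hune ∈ w := hus.subset (List.getLast_mem hune)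
    rw [List.getLast?_eq_getLast (l := u) hune]
    exact Finset.mem_image.mpr ⟨u.getLast hune, Finset.mem_range.mpr (hw _ hmem), rfl⟩
  rw [Finset.sum_image (fun x _ y _ h => Option.some_inj.mp h)] at hfib
  rw [← herase, hfib]
  apply Finset.sum_congr rfl
  intro a _
  congr 1
  ext u
  simp only [Finset.mem_filter, Finset.mem_erase]
  constructor
  · rintro ⟨h1, h2⟩
    refine ⟨⟨?_, h1⟩, h2⟩
    rintro rfl; simp at h2
  · rintro ⟨⟨-, h1⟩, h2⟩
    exact ⟨h1, h2⟩

lemma key {b : ℕ} (hb : 2 ≤ b) {w : List ℕ} (hw : ∀ d ∈ w, d < b) :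
    ∑ a ∈ Finset.range b, (Tf (w ++ [a])).card = (2 * b - 1) * (Tf w).card := by
  set S := (Tf w).card with hS
  have hS1 : 1 ≤ S := Tf_card_pos w
  have h1 : ∀ a : ℕ,
      (Tf (w ++ [a])).card + ((Tf w).filter (fun u => u.getLast? = some a)).card
        + (if a = 0 then 1 else 0) = 2 * S := by
    intro a
    rw [← Tf_inter, Tf_append, Finset.card_union_add_card_inter]
    have himg : ((if a = 0 then (Tf w).erase [] else Tf w).image (· ++ [a])).card
        = (if a = 0 then (Tf w).erase [] else Tf w).card := by
      apply Finset.card_image_of_injective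
      intro x y hxy
      simpa using hxy
    rw [himg]
    split_ifs with ha
    · rw [Finset.card_erase_of_mem (nil_mem_Tf w)]
      omega
    · omega
  have hsum := Finset.sum_congr rfl (fun a (_ : a ∈ Finset.range b) => h1 a)
  rw [Finset.sum_add_distrib, Finset.sum_add_distrib, sum_fibers hw,
    Finset.sum_const, Finset.card_range, smul_eq_mul] at hsum
  have hind : ∑ a ∈ Finset.range b, (if a = 0 then 1 else 0) = 1 := by
    rw [Finset.sum_ite_eq' (Finset.range b) 0 (fun _ => 1)]
    simp [Nat.lt_of_lt_of_le Nat.zero_lt_two hb]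
  rw [hind] at hsum
  have h2 : ∑ a ∈ Finset.range b, (Tf (w ++ [a])).card + S = 2 * b * S := by
    have : b * (2 * S) = 2 * b * S := by ring
    omega
  have h3 : (2 * b - 1) * S = 2 * b * S - S := by
    rw [Nat.sub_mul, one_mul]
  omega

lemma Sb_eq (b : ℕ) (hb : 2 ≤ b) (q r : ℕ) (hr : r < b) :
    Sb b (b * q + r) = (Tf ((Nat.digits b q).reverse ++ [r])).card := by
  by_cases h : b * q + r = 0
  · have hq : q = 0 := by
      rcases Nat.eq_zero_of_add_eq_zero_right h with h'
      have := Nat.mul_eq_zero.mp h'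
      omega
    have hr0 : r = 0 := by omega
    subst hq; subst hr0
    rw [Sb]
    simp only [mul_zero, zero_add, Nat.digits_zero, List.reverse_nil, List.nil_append]
    rw [lbCount_eq]
    -- card (Tf []) = card (Tf [0]) : both are {[]}
    have h1 : Tf [] = {[]} := by
      ext u
      simp only [mem_Tf, List.sublist_nil, Finset.mem_singleton]
      constructor
      · rintro ⟨rfl, -⟩; rfl
      · rintro rfl; simp
    have h2 : Tf [0] = {[]} := by
      ext u
      simp only [mem_Tf, List.sublist_singleton, Finset.mem_singleton]
      constructor
      · rintro ⟨h | h, hh⟩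
        · exact h
        · subst h; simp at hh
      · rintro rfl; simp
    rw [h1, h2]
  · have hpos : 0 < b * q + r := Nat.pos_of_ne_zero h
    rw [Sb, Nat.digits_def' (by omega : 1 < b) hpos]
    have hmod : (b * q + r) % b = r := by
      rw [Nat.mul_add_mod]
      exact Nat.mod_eq_of_lt hr
    have hdiv : (b * q + r) / b = q := by
      rw [Nat.mul_add_div (by omega : 0 < b)]
      simp [Nat.div_eq_of_lt hr]
    rw [hmod, hdiv, List.reverse_cons, lbCount_eq]

lemma step (b : ℕ) (hb : 2 ≤ b) (q : ℕ) :
    ∑ r ∈ Finset.range b, Sb b (b * q + r) = (2 * b - 1) * Sb b q := by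
  have hw : ∀ d ∈ (Nat.digits b q).reverse, d < b := by
    intro d hd
    exact Nat.digits_lt_base (by omega) (List.mem_reverse.mp hd)
  calc ∑ r ∈ Finset.range b, Sb b (b * q + r)
      = ∑ r ∈ Finset.range b, (Tf ((Nat.digits b q).reverse ++ [r])).card := by
        apply Finset.sum_congr rfl
        intro r hr
        exact Sb_eq b hb q r (Finset.mem_range.mp hr)
    _ = (2 * b - 1) * (Tf ((Nat.digits b q).reverse)).card := key hb hw
    _ = (2 * b - 1) * Sb b q := by rw [Sb, lbCount_eq]

theorem stmt18 (b n : ℕ) (hb : 2 ≤ b) :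
    Asum b (b * n) = (2 * b - 1) * Asum b n := by
  induction n with
  | zero => simp [Asum]
  | succ n ih =>
    have h1 : b * (n + 1) = b * n + b := by ring
    rw [h1, Asum, Finset.sum_range_add, ← Asum]
    have h2 : ∑ x ∈ Finset.range b, Sb b (b * n + x) = (2 * b - 1) * Sb b n :=
      step b hb n
    rw [h2, ih]
    have h3 : Asum b (n + 1) = Asum b n + Sb b n := Finset.sum_range_succ _ _
    rw [h3, Nat.mul_add]
end
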